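/- Let (V, ⟨·,·⟩) be a finite-dimensional real inner product space, W ∈ V with ‖W‖ < 1, and Z the Randers norm with Zermelo data (⟨·,·⟩, W), with fundamental tensor g. The fundamental tensor of Z is positive definite at every nonzero vector: for every v ≠ 0, the symmetric bilinear form g_v(u,w) := (1/2)·∂²/∂t∂s [Z(v+tu+sw)²]|_{t=s=0} on V is positive definite (hence Z is a Minkowski norm). -/

import Mathlib

open scoped RealInnerProductSpace
open Classical

set_option maxHeartbeats 1000000

/-- The Randers norm with Zermelo data `(⟪·,·⟫, W)` on a real inner product space:
`Z(0) = 0` and, for `v ≠ 0`,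
`Z(v) = (√(⟪W,v⟫² + (1 − ‖W‖²)‖v‖²) − ⟪W,v⟫)/(1 − ‖W‖²)`. -/
noncomputable def randers {V : Type*} [NormedAddCommGroup V] [InnerProductSpace ℝ V]
    (W : V) (v : V) : ℝ :=
  if v = 0 then 0
  else (Real.sqrt (⟪W, v⟫ ^ 2 + (1 - ‖W‖ ^ 2) * ‖v‖ ^ 2) - ⟪W, v⟫) / (1 - ‖W‖ ^ 2)

/-- The fundamental tensor of a (Minkowski) norm `F` at the point `v`, evaluated on the
pair of vectors `(u, w)`: one half of the second Fréchet derivative of `F²` at `v`. -/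
noncomputable def fundamentalTensor {V : Type*} [NormedAddCommGroup V] [NormedSpace ℝ V]
    (F : V → ℝ) (v u w : V) : ℝ :=
  (1 / 2) * iteratedFDeriv ℝ 2 (fun x => F x ^ 2) v ![u, w]

section Aux

variable {V : Type*} [NormedAddCommGroup V] [InnerProductSpace ℝ V]

/-- The square-root part of the Randers norm. -/
noncomputable def rS (W x : V) : ℝ := Real.sqrt (⟪W, x⟫ ^ 2 + (1 - ‖W‖ ^ 2) * ‖x‖ ^ 2)

/-- Coefficient of `innerSL ℝ W` in the derivative of the squared Randers norm. -/
noncomputable def rc1 (W x : V) : ℝ :=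
  -(2 / (1 - ‖W‖ ^ 2) ^ 2) * ((rS W x - ⟪W, x⟫) * (rS W x - ⟪W, x⟫)) / rS W x

/-- Coefficient of `innerSL ℝ x` in the derivative of the squared Randers norm. -/
noncomputable def rc2 (W x : V) : ℝ :=
  2 / (1 - ‖W‖ ^ 2) * (rS W x - ⟪W, x⟫) / rS W x

omit [InnerProductSpace ℝ V] in
lemma ha_pos {W : V} (hW : ‖W‖ < 1) : 0 < 1 - ‖W‖ ^ 2 := by
  nlinarith [norm_nonneg W]

lemma rphi_pos {W : V} (hW : ‖W‖ < 1) {x : V} (hx : x ≠ 0) :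
    0 < ⟪W, x⟫ ^ 2 + (1 - ‖W‖ ^ 2) * ‖x‖ ^ 2 :=
  add_pos_of_nonneg_of_pos (sq_nonneg _)
    (mul_pos (ha_pos hW) (pow_pos (norm_pos_iff.2 hx) 2))

lemma rS_pos {W : V} (hW : ‖W‖ < 1) {x : V} (hx : x ≠ 0) : 0 < rS W x :=
  Real.sqrt_pos.2 (rphi_pos hW hx)

lemma rS_sq {W : V} (hW : ‖W‖ < 1) {x : V} (hx : x ≠ 0) :
    rS W x ^ 2 = ⟪W, x⟫ ^ 2 + (1 - ‖W‖ ^ 2) * ‖x‖ ^ 2 :=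
  Real.sq_sqrt (rphi_pos hW hx).le

lemma rS_gt {W : V} (hW : ‖W‖ < 1) {x : V} (hx : x ≠ 0) : ⟪W, x⟫ < rS W x := by
  calc ⟪W, x⟫ ≤ |⟪W, x⟫| := le_abs_self _
    _ = Real.sqrt (⟪W, x⟫ ^ 2) := (Real.sqrt_sq_eq_abs _).symm
    _ < rS W x := Real.sqrt_lt_sqrt (sq_nonneg _)
        (by nlinarith [mul_pos (ha_pos hW) (pow_pos (norm_pos_iff.2 hx) 2)])

lemma randers_eq (W : V) (x : V) :
    randers W x = (rS W x - ⟪W, x⟫) / (1 - ‖W‖ ^ 2) := by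
  unfold randers rS
  split_ifs with h
  · subst h; simp
  · rfl

lemma hasFDerivAt_inner_left' (W x : V) :
    HasFDerivAt (fun y : V => ⟪W, y⟫) (innerSL ℝ W) x :=
  (innerSL ℝ W).hasFDerivAt

lemma hasFDerivAt_inner_right' (u x : V) :
    HasFDerivAt (fun y : V => ⟪y, u⟫) (innerSL ℝ u) x := by
  have h := (innerSL ℝ u).hasFDerivAt (x := x)
  apply h.congr_of_eventuallyEq
  filter_upwards with y
  simp [real_inner_comm]

lemma hasFDerivAt_norm_sq' (x : V) :
    HasFDerivAt (fun y : V => ‖y‖ ^ 2) ((2 : ℝ) • (innerSL ℝ x)) x := by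
  have h := (hasFDerivAt_id x).inner ℝ (hasFDerivAt_id x)
  have h2 := h.congr_of_eventuallyEq (f₁ := fun y : V => ‖y‖ ^ 2) ?_
  · refine h2.congr_fderiv ?_
    ext w
    simp [real_inner_comm, two_mul]
  · filter_upwards with y; simp [real_inner_self_eq_norm_sq]

/-- Quotient rule for `ℝ`-valued functions on a real normed space. -/
lemma hasFDerivAt_div' {f g : V → ℝ} {f' g' : V →L[ℝ] ℝ} {x : V}
    (hf : HasFDerivAt f f' x) (hg : HasFDerivAt g g' x) (hgx : g x ≠ 0) :
    HasFDerivAt (fun y => f y / g y) ((g x)⁻¹ • f' - (f x / g x ^ 2) • g') x := by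
  have hinv : HasFDerivAt (fun y => (g y)⁻¹) ((-(g x ^ 2)⁻¹) • g') x := by
    have h := (hasDerivAt_inv hgx).comp_hasFDerivAt x hg
    exact h
  have h := hf.mul hinv
  have hfun : (fun y => f y / g y) = fun y => f y * (g y)⁻¹ := by
    funext y; rw [div_eq_mul_inv]
  rw [hfun]
  refine h.congr_fderiv ?_
  ext w
  simp
  field_simp
  ring

lemma hasFDerivAt_rS {W : V} (hW : ‖W‖ < 1) {x : V} (hx : x ≠ 0) :
    HasFDerivAt (rS W)
      ((⟪W, x⟫ / rS W x) • innerSL ℝ W + ((1 - ‖W‖ ^ 2) / rS W x) • innerSL ℝ x) x := by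
  have hWW : HasFDerivAt (fun y : V => ⟪W, y⟫ ^ 2)
      ((2 * ⟪W, x⟫) • (innerSL ℝ W : V →L[ℝ] ℝ)) x := by
    have h1 : (fun y : V => ⟪W, y⟫ ^ 2) = fun y : V => ⟪W, y⟫ * ⟪W, y⟫ := by
      funext y; ring
    rw [h1]
    refine ((hasFDerivAt_inner_left' W x).mul (hasFDerivAt_inner_left' W x)).congr_fderiv ?_
    ext w
    simp
    ring
  have hφ : HasFDerivAt (fun y : V => ⟪W, y⟫ ^ 2 + (1 - ‖W‖ ^ 2) * ‖y‖ ^ 2)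
      ((2 * ⟪W, x⟫) • innerSL ℝ W + (2 * (1 - ‖W‖ ^ 2)) • innerSL ℝ x) x := by
    refine (hWW.add ((hasFDerivAt_norm_sq' x).const_mul (1 - ‖W‖ ^ 2))).congr_fderiv ?_
    ext w
    simp
    ring
  have h2 := hφ.sqrt (ne_of_gt (rphi_pos hW hx))
  have h3 := rS_pos hW hx
  unfold rS at h3 ⊢
  have h3' : Real.sqrt (⟪W, x⟫ ^ 2 + (1 - ‖W‖ ^ 2) * ‖x‖ ^ 2) ≠ 0 := ne_of_gt h3
  refine h2.congr_fderiv ?_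
  ext w
  simp
  field_simp

lemma randers_sq_hasFDerivAt {W : V} (hW : ‖W‖ < 1) {x : V} (hx : x ≠ 0) :
    HasFDerivAt (fun y : V => randers W y ^ 2)
      (rc1 W x • innerSL ℝ W + rc2 W x • innerSL ℝ x) x := by
  have hfun : (fun y : V => randers W y ^ 2)
      = fun y : V => (rS W y - ⟪W, y⟫) * (rS W y - ⟪W, y⟫)
          * ((1 - ‖W‖ ^ 2) * (1 - ‖W‖ ^ 2))⁻¹ := by
    funext y; rw [randers_eq]
    have ha' : (1 : ℝ) - ‖W‖ ^ 2 ≠ 0 := ne_of_gt (ha_pos hW)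
    field_simp
  rw [hfun]
  have hA := (hasFDerivAt_rS hW hx).sub (hasFDerivAt_inner_left' W x)
  have h1 := (hA.mul hA).mul_const ((1 - ‖W‖ ^ 2) * (1 - ‖W‖ ^ 2))⁻¹
  refine h1.congr_fderiv ?_
  ext w
  have h3 := rS_pos hW hx
  have h3' : rS W x ≠ 0 := ne_of_gt h3
  have ha := ha_pos hW
  have ha' : (1 : ℝ) - ‖W‖ ^ 2 ≠ 0 := ne_of_gt ha
  simp [rc1, rc2]
  field_simp
  ring

end Aux

/-- The fundamental tensor of the Randers norm with Zermelo data `(⟪·,·⟫, W)`, `‖W‖ < 1`,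
is positive definite at every nonzero vector (hence the Randers norm is a Minkowski
norm). -/
theorem randers_fundamentalTensor_posdef {V : Type*} [NormedAddCommGroup V]
    [InnerProductSpace ℝ V] [FiniteDimensional ℝ V] (W : V) (hW : ‖W‖ < 1) :
    ∀ v : V, v ≠ 0 → ∀ u : V, u ≠ 0 → 0 < fundamentalTensor (randers W) v u u := by
  intro v hv u hu
  have ha : 0 < 1 - ‖W‖ ^ 2 := ha_pos hW
  have ha' : (1 : ℝ) - ‖W‖ ^ 2 ≠ 0 := ne_of_gt ha
  have hS0 : 0 < rS W v := rS_pos hW hv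
  have hS0' : rS W v ≠ 0 := ne_of_gt hS0
  have hS0P : ⟪W, v⟫ < rS W v := rS_gt hW hv
  have hq0 : 0 < ‖v‖ ^ 2 := pow_pos (norm_pos_iff.2 hv) 2
  have hq2 : 0 < ‖u‖ ^ 2 := pow_pos (norm_pos_iff.2 hu) 2
  -- C² smoothness
  have hG2 : ContDiffAt ℝ 2 (fun x : V => randers W x ^ 2) v := by
    have hfun : (fun x : V => randers W x ^ 2)
        = fun x : V => ((Real.sqrt (⟪W, x⟫ ^ 2 + (1 - ‖W‖ ^ 2) * ‖x‖ ^ 2) - ⟪W, x⟫)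
            / (1 - ‖W‖ ^ 2)) ^ 2 := by
      funext y; rw [randers_eq]; rfl
    rw [hfun]
    have hin : ContDiffAt ℝ 2 (fun x : V => ⟪W, x⟫) v :=
      ContDiffAt.inner ℝ contDiffAt_const contDiffAt_id
    have h1 : ContDiffAt ℝ 2 (fun x : V => ⟪W, x⟫ ^ 2 + (1 - ‖W‖ ^ 2) * ‖x‖ ^ 2) v :=
      (hin.pow 2).add (contDiffAt_const.mul (contDiff_norm_sq (𝕜 := ℝ)).contDiffAt)
    exact (((h1.sqrt (ne_of_gt (rphi_pos hW hv))).sub hin).div_const _).pow 2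
  have hdifffd : DifferentiableAt ℝ (fderiv ℝ (fun x : V => randers W x ^ 2)) v := by
    have h := hG2.fderiv_right (m := 1) (by norm_num)
    exact h.differentiableAt (by norm_num)
  have e1 : fundamentalTensor (randers W) v u u
      = (1 / 2) * fderiv ℝ (fderiv ℝ (fun x : V => randers W x ^ 2)) v u u := by
    rw [fundamentalTensor, iteratedFDeriv_two_apply]
    simp
  have e2 : fderiv ℝ (fun x : V => fderiv ℝ (fun y : V => randers W y ^ 2) x u) v u
      = fderiv ℝ (fderiv ℝ (fun x : V => randers W x ^ 2)) v u u := by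
    rw [(hdifffd.hasFDerivAt.clm_apply (hasFDerivAt_const u v)).fderiv]
    simp
  have hev : (fun x : V => fderiv ℝ (fun y : V => randers W y ^ 2) x u)
      =ᶠ[nhds v] fun x : V => rc1 W x * ⟪W, u⟫ + rc2 W x * ⟪x, u⟫ := by
    filter_upwards [isOpen_compl_singleton.mem_nhds
      (Set.mem_compl_singleton_iff.mpr hv)] with x hx
    rw [(randers_sq_hasFDerivAt hW hx).fderiv]
    simp
  have e3 : fderiv ℝ (fun x : V => fderiv ℝ (fun y : V => randers W y ^ 2) x u) v u
      = fderiv ℝ (fun x : V => rc1 W x * ⟪W, u⟫ + rc2 W x * ⟪x, u⟫) v u := by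
    rw [hev.fderiv_eq]
  have e4 : fderiv ℝ (fun x : V => rc1 W x * ⟪W, u⟫ + rc2 W x * ⟪x, u⟫) v u
      = 2 * (rS W v * (⟪W, v⟫ * ⟪W, u⟫ + (1 - ‖W‖ ^ 2) * ⟪v, u⟫ - ⟪W, u⟫ * rS W v) ^ 2
          + (rS W v - ⟪W, v⟫) *
            ((rS W v ^ 2 - ⟪W, v⟫ ^ 2) * ((1 - ‖W‖ ^ 2) * ‖u‖ ^ 2 + ⟪W, u⟫ ^ 2)
              - (1 - ‖W‖ ^ 2) ^ 2 * ⟪v, u⟫ ^ 2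
              - 2 * (1 - ‖W‖ ^ 2) * ⟪W, v⟫ * ⟪W, u⟫ * ⟪v, u⟫
              + (1 - ‖W‖ ^ 2) * ⟪W, v⟫ ^ 2 * ‖u‖ ^ 2))
        / ((1 - ‖W‖ ^ 2) ^ 2 * rS W v ^ 3) := by
    have hA := (hasFDerivAt_rS hW hv).sub (hasFDerivAt_inner_left' W v)
    have hrc1 := hasFDerivAt_div' ((hA.mul hA).const_mul (-(2 / (1 - ‖W‖ ^ 2) ^ 2)))
      (hasFDerivAt_rS hW hv) hS0'
    have hrc2 := hasFDerivAt_div' (hA.const_mul (2 / (1 - ‖W‖ ^ 2)))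
      (hasFDerivAt_rS hW hv) hS0'
    have hKder := (hrc1.mul_const ⟪W, u⟫).add (hrc2.mul (hasFDerivAt_inner_right' u v))
    have hKder2 : HasFDerivAt (fun x : V => rc1 W x * ⟪W, u⟫ + rc2 W x * ⟪x, u⟫) _ v :=
      hKder.congr_of_eventuallyEq (by
        filter_upwards with y
        simp only [rc1, rc2, Pi.add_apply, Pi.mul_apply, Pi.sub_apply])
    rw [hKder2.fderiv]
    simp [real_inner_self_eq_norm_sq]
    field_simp
    ring
  rw [e1, ← e2, e3, e4]
  -- purely scalar positivity problem now
  set s : ℝ := rS W v with hsdef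
  set t : ℝ := ⟪W, v⟫ with htdef
  set P1 : ℝ := ⟪W, u⟫ with hP1def
  set q1 : ℝ := ⟪v, u⟫ with hq1def
  set a : ℝ := 1 - ‖W‖ ^ 2 with hadef
  have hS0sq : s ^ 2 = t ^ 2 + a * ‖v‖ ^ 2 := rS_sq hW hv
  set M : ℝ := t * P1 + a * q1 - P1 * s with hMdef
  set N : ℝ := (s ^ 2 - t ^ 2) * (a * ‖u‖ ^ 2 + P1 ^ 2) - a ^ 2 * q1 ^ 2
      - 2 * a * t * P1 * q1 + a * t ^ 2 * ‖u‖ ^ 2 with hNdef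
  have hNdecomp : N = a ^ 2 * (‖v‖ ^ 2 * ‖u‖ ^ 2 - q1 ^ 2)
      + a * (t ^ 2 * ‖u‖ ^ 2 - 2 * t * P1 * q1 + ‖v‖ ^ 2 * P1 ^ 2) := by
    rw [hNdef]
    linear_combination (a * ‖u‖ ^ 2 + P1 ^ 2) * hS0sq
  have hQeq : ‖t • u - P1 • v‖ ^ 2
      = t ^ 2 * ‖u‖ ^ 2 - 2 * t * P1 * q1 + ‖v‖ ^ 2 * P1 ^ 2 := by
    rw [norm_sub_sq_real, hq1def]
    simp [norm_smul, real_inner_smul_left, real_inner_smul_right, mul_pow, sq_abs,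
      real_inner_comm u v]
    ring
  have hQ : 0 ≤ t ^ 2 * ‖u‖ ^ 2 - 2 * t * P1 * q1 + ‖v‖ ^ 2 * P1 ^ 2 := by
    rw [← hQeq]; positivity
  have hCS : 0 ≤ ‖v‖ ^ 2 * ‖u‖ ^ 2 - q1 ^ 2 := by
    have h := real_inner_mul_inner_self_le v u
    rw [real_inner_self_eq_norm_sq, real_inner_self_eq_norm_sq] at h
    rw [hq1def]
    nlinarith
  have hNnn : 0 ≤ N := by
    rw [hNdecomp]
    nlinarith [sq_nonneg a, mul_nonneg ha.le hQ, mul_nonneg (mul_nonneg ha.le ha.le) hCS]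
  have hpos : 0 < s * M ^ 2 + (s - t) * N := by
    by_cases hMz : M = 0
    · have hNpos : 0 < N := by
        rcases lt_or_eq_of_le hNnn with h | h
        · exact h
        exfalso
        have hNz : a ^ 2 * (‖v‖ ^ 2 * ‖u‖ ^ 2 - q1 ^ 2)
            + a * (t ^ 2 * ‖u‖ ^ 2 - 2 * t * P1 * q1 + ‖v‖ ^ 2 * P1 ^ 2) = 0 := by
          rw [← hNdecomp]; exact h.symm
        have hCSle : ‖v‖ ^ 2 * ‖u‖ ^ 2 - q1 ^ 2 ≤ 0 := by
          nlinarith [mul_pos ha ha, mul_nonneg ha.le hQ]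
        have hCS0 : ‖v‖ ^ 2 * ‖u‖ ^ 2 - q1 ^ 2 = 0 := le_antisymm hCSle hCS
        have hQle : t ^ 2 * ‖u‖ ^ 2 - 2 * t * P1 * q1 + ‖v‖ ^ 2 * P1 ^ 2 ≤ 0 := by
          nlinarith [mul_pos ha ha]
        have hQ0 : t ^ 2 * ‖u‖ ^ 2 - 2 * t * P1 * q1 + ‖v‖ ^ 2 * P1 ^ 2 = 0 :=
          le_antisymm hQle hQ
        have h2 : ‖t • u - P1 • v‖ ^ 2 = 0 := by rw [hQeq]; linarith
        have h3 : ‖t • u - P1 • v‖ = 0 := by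
          exact pow_eq_zero_iff two_ne_zero |>.mp h2
        have hvec2 : t • u = P1 • v := by
          have := norm_eq_zero.mp h3
          rwa [sub_eq_zero] at this
        have he1 : t * ‖u‖ ^ 2 = P1 * q1 := by
          have h4 := congrArg (fun z : V => ⟪z, u⟫) hvec2
          simp only [real_inner_smul_left] at h4
          rw [real_inner_self_eq_norm_sq] at h4
          rw [hq1def]
          exact h4
        have hM0 : t * P1 + a * q1 - P1 * s = 0 := by rw [← hMdef]; exact hMz
        have hfinal : ‖u‖ ^ 2 * s * (s - t) = 0 := by
          linear_combination ‖u‖ ^ 2 * hS0sq + a * hCS0 + (t - s) * he1 + q1 * hM0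
        have hpos2 := mul_pos (mul_pos hq2 hS0) (sub_pos.mpr hS0P)
        linarith
      nlinarith [hS0, hS0P, sq_nonneg M]
    · have hM2 : 0 < M ^ 2 := by positivity
      nlinarith [hS0, hS0P, hNnn, mul_nonneg (sub_pos.mpr hS0P).le hNnn]
  have hden : 0 < a ^ 2 * s ^ 3 := by positivity
  have hfin : 0 < 2 * (s * M ^ 2 + (s - t) * N) / (a ^ 2 * s ^ 3) := by positivity
  linarith
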